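/- Let δ > 0 be real, let L > M > 0 be natural numbers, and let c be a real number with 0 < c, c·(L−M) ≤ log(1+δ/2), and c·M ≤ log 2. Then ∑_{l=M+1}^{L} C(L,l) c^l ≤ δ. -/

import Mathlib

/-- Let `δ > 0` be real, `L > M > 0` naturals, and `c` real with `0 < c`,
`c·(L−M) ≤ log(1+δ/2)` and `c·M ≤ log 2`.  Then `∑_{l=M+1}^{L} C(L,l) c^l ≤ δ`. -/
theorem binomial_tail_le_delta (δ : ℝ) (hδ : 0 < δ) (L M : ℕ) (hM : 0 < M) (hML : M < L)
    (c : ℝ) (hc : 0 < c) (h1 : c * ((L : ℝ) - (M : ℝ)) ≤ Real.log (1 + δ / 2))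
    (h2 : c * (M : ℝ) ≤ Real.log 2) :
    ∑ l ∈ Finset.Icc (M + 1) L, (L.choose l : ℝ) * c ^ l ≤ δ := by
  have hc1 : (0:ℝ) < 1 + c := by linarith
  have hexp : ∀ n : ℕ, (1+c)^n ≤ Real.exp (c * n) := by
    intro n
    calc (1+c)^n ≤ (Real.exp c)^n :=
          pow_le_pow_left₀ hc1.le (by linarith [Real.add_one_le_exp c]) n
      _ = Real.exp (c*n) := by rw [← Real.exp_nat_mul]; ring_nf
  have hM2 : (1+c)^M ≤ 2 := le_trans (hexp M) (by
    rw [← Real.exp_log (by norm_num : (0:ℝ) < 2)]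
    exact Real.exp_le_exp.mpr h2)
  have hLM : (1+c)^(L-M) ≤ 1 + δ/2 := le_trans (hexp (L-M)) (by
    rw [← Real.exp_log (by linarith : (0:ℝ) < 1 + δ/2)]
    apply Real.exp_le_exp.mpr
    rw [Nat.cast_sub hML.le]; exact h1)
  have key : ∑ l ∈ Finset.Icc (M+1) L, (L.choose l : ℝ) * c^l
      ≤ (1+c)^L - (1+c)^M := by
    have hL : (1+c)^L = ∑ l ∈ Finset.range (L+1), (L.choose l : ℝ) * c^l := by
      rw [add_comm, add_pow]; simp [mul_comm]
    have hMp : (1+c)^M = ∑ l ∈ Finset.range (M+1), (M.choose l : ℝ) * c^l := by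
      rw [add_comm, add_pow]; simp [mul_comm]
    rw [hL, hMp]
    have hsplit : Finset.range (L+1) = Finset.range (M+1) ∪ Finset.Icc (M+1) L := by
      ext x; simp only [Finset.mem_range, Finset.mem_union, Finset.mem_Icc,
        Nat.lt_succ_iff]; omega
    rw [hsplit, Finset.sum_union (by
      simp only [Finset.disjoint_left, Finset.mem_range, Finset.mem_Icc,
        Nat.lt_succ_iff]
      omega)]
    have hle : ∑ l ∈ Finset.range (M+1), (M.choose l : ℝ) * c^l
        ≤ ∑ l ∈ Finset.range (M+1), (L.choose l : ℝ) * c^l := by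
      apply Finset.sum_le_sum
      intro i _
      exact mul_le_mul_of_nonneg_right
        (by exact_mod_cast Nat.choose_le_choose i hML.le) (pow_nonneg hc.le i)
    linarith
  have hfac : (1+c)^L - (1+c)^M = (1+c)^M * ((1+c)^(L-M) - 1) := by
    rw [mul_sub, mul_one, ← pow_add]
    congr 2
    omega
  have hone : (1:ℝ) ≤ (1+c)^(L-M) := one_le_pow₀ (by linarith)
  calc ∑ l ∈ Finset.Icc (M+1) L, (L.choose l : ℝ) * c^l
      ≤ (1+c)^L - (1+c)^M := key
    _ = (1+c)^M * ((1+c)^(L-M) - 1) := hfac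
    _ ≤ 2 * (δ/2) := by
        apply mul_le_mul hM2 (by linarith) (by linarith) (by norm_num)
    _ = δ := by ring
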